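/- Let Δ be a 2-local derivation on M_2(B) vanishing on the span of the matrix units. If x ∈ M_2(B) has (k,s)-entry equal to λ·1_B for some scalar λ ∈ ℂ, then the (k,s)-entry of Δ(x) is zero. -/

import Mathlib

open Matrix

def IsDerivation {A : Type*} [Ring A] [Algebra ℂ A] (D : A → A) : Prop :=
  (∀ x y, D (x + y) = D x + D y) ∧ (∀ (c : ℂ) (x), D (c • x) = c • D x) ∧
  (∀ x y, D (x * y) = D x * y + x * D y)

def Is2LocalDerivation {A : Type*} [Ring A] [Algebra ℂ A] (Δ : A → A) : Prop :=
  ∀ x y, ∃ D, IsDerivation D ∧ Δ x = D x ∧ Δ y = D y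

def HasInnerDerivationProperty (A : Type*) [Ring A] [Algebra ℂ A] : Prop :=
  ∀ D : A → A, IsDerivation D → ∃ a : A, ∀ x, D x = a * x - x * a

/-- `Δ` vanishes on the linear span of the matrix units. -/
def VanishesOnUnits {A : Type*} [Ring A] [Algebra ℂ A] {n : ℕ}
    (Δ : Matrix (Fin n) (Fin n) A → Matrix (Fin n) (Fin n) A) : Prop :=
  ∀ x ∈ Submodule.span ℂ (Set.range fun p : Fin n × Fin n =>
      Matrix.single p.1 p.2 (1 : A)), Δ x = 0
theorem stmt12 {B : Type*} [NormedRing B] [NormedAlgebra ℂ B] [CompleteSpace B]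
    (Δ : Matrix (Fin 2) (Fin 2) B → Matrix (Fin 2) (Fin 2) B)
    (hΔ : Is2LocalDerivation Δ) (hvan : VanishesOnUnits Δ)
    (k s : Fin 2) (lam : ℂ) (x : Matrix (Fin 2) (Fin 2) B)
    (hx : x k s = lam • (1 : B)) :
    Δ x k s = 0 := by
  set e : Matrix (Fin 2) (Fin 2) B := Matrix.single s k (1 : B) with he
  obtain ⟨D, ⟨hadd, hsmul, hmul⟩, hDx, hDe⟩ := hΔ x e
  have hΔe : Δ e = 0 := hvan e (Submodule.subset_span ⟨(s, k), rfl⟩)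
  have hDe0 : D e = 0 := by rw [← hDe, hΔe]
  have key : e * x * e = lam • e := by
    ext i j
    by_cases hi : i = s
    · by_cases hj : j = k
      · subst hi hj
        rw [he]
        rw [Matrix.mul_single_apply_same,
          Matrix.single_mul_apply_same]
        simp [hx, smul_comm]
      · simp [he, hj, Ne.symm hj]
    · simp only [he, Matrix.mul_apply, Matrix.single_mul_apply_of_ne (h := hi),
        zero_mul, Finset.sum_const_zero, Matrix.smul_apply,
        Matrix.single_apply_of_row_ne (Ne.symm hi), smul_zero]
  have h1 : D (e * x * e) = e * D x * e := by
    rw [hmul, hmul, hDe0]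
    simp
  have h2 : D (lam • e) = 0 := by rw [hsmul, hDe0, smul_zero]
  have h3 : e * D x * e = 0 := by rw [← h1, key, h2]
  have h4 := congrFun (congrFun h3 s) k
  rw [he, Matrix.mul_single_apply_same,
    Matrix.single_mul_apply_same] at h4
  rw [hDx]
  simpa using h4
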